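/- Let P : ℕ → ℝ_{>0} be any function. Then the set C_P of irrational α ∈ (0,1) for which there exists an odd n ≥ 3 with q_n > P(q_{n-1}), q_{n+1} > P(q_n), and q_{n+2} > P(q_{n+1}) (where q_k are the convergent denominators of α) is a dense open subset of (0,1)\ℚ (with its subspace topology). -/

import Mathlib

open scoped BigOperators

/-- The Gauss map `x ↦ 1/x - ⌊1/x⌋` (with `G 0 = 0`). -/
noncomputable def gaussMap (x : ℝ) : ℝ := if x = 0 then 0 else 1 / x - ⌊1 / x⌋

/-- Iterates `α_n = G^n(α)` of the Gauss map. -/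
noncomputable def alphaSeq (α : ℝ) (n : ℕ) : ℝ := gaussMap^[n] α

/-- Partial quotients `a_n` of the continued fraction of `α`. -/
noncomputable def aSeq (α : ℝ) : ℕ → ℤ
  | 0 => 0
  | n + 1 => ⌊1 / alphaSeq α n⌋

/-- Denominators `q_n` of the best rational approximations of `α`. -/
noncomputable def qSeq (α : ℝ) : ℕ → ℤ
  | 0 => 1
  | 1 => ⌊1 / α⌋
  | n + 2 => qSeq α n + aSeq α (n + 2) * qSeq α (n + 1)

/-- Numerators `p_n` of the best rational approximations of `α`. -/
noncomputable def pSeq (α : ℝ) : ℕ → ℤ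
  | 0 => 0
  | 1 => 1
  | n + 2 => pSeq α n + aSeq α (n + 2) * pSeq α (n + 1)

/-- The irrational numbers in `(0,1)`. -/
def Irr01 : Set ℝ := {x | x ∈ Set.Ioo (0 : ℝ) 1 ∧ Irrational x}



lemma gauss_step {x : ℝ} (hx : x ∈ Set.Ioo (0:ℝ) 1) (hirr : Irrational x) :
    gaussMap x ∈ Set.Ioo (0:ℝ) 1 ∧ Irrational (gaussMap x) ∧ 1 ≤ ⌊1/x⌋ ∧
      gaussMap x = 1/x - ⌊1/x⌋ := by
  obtain ⟨hx0, hx1⟩ := hx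
  have hne : x ≠ 0 := ne_of_gt hx0
  have h1x : 1 < 1/x := one_lt_one_div hx0 hx1
  have hfl : 1 ≤ ⌊1/x⌋ := by
    exact_mod_cast Int.le_floor.2 (by exact_mod_cast h1x.le)
  have hirr1 : Irrational (1/x) := by
    rw [one_div]; exact hirr.inv
  have hG : gaussMap x = 1/x - ⌊1/x⌋ := if_neg hne
  have hfr : gaussMap x = Int.fract (1/x) := by rw [hG]; rfl
  have hirrG : Irrational (gaussMap x) := by
    rw [hG]; exact hirr1.sub_intCast _
  refine ⟨⟨?_, ?_⟩, hirrG, hfl, hG⟩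
  · rw [hfr]
    rcases lt_or_eq_of_le (Int.fract_nonneg (1/x)) with h | h
    · exact h
    · exfalso; exact (Int.fract_eq_iff.mp h.symm).2.2.elim (fun z hz => hirr1 ⟨z, by push_cast at hz ⊢; linarith⟩) |>.elim
  · rw [hfr]; exact Int.fract_lt_one _

lemma alphaSeq_succ (α : ℝ) (n : ℕ) : alphaSeq α (n+1) = gaussMap (alphaSeq α n) := by
  simp [alphaSeq, Function.iterate_succ_apply']

lemma alphaSeq_succ' (α : ℝ) (n : ℕ) : alphaSeq α (n+1) = alphaSeq (gaussMap α) n := by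
  simp [alphaSeq, Function.iterate_succ_apply]

lemma alphaSeq_mem {α : ℝ} (hα : α ∈ Irr01) (n : ℕ) :
    alphaSeq α n ∈ Set.Ioo (0:ℝ) 1 ∧ Irrational (alphaSeq α n) := by
  induction n with
  | zero => exact ⟨hα.1, hα.2⟩
  | succ n ih =>
    rw [alphaSeq_succ]
    exact ⟨(gauss_step ih.1 ih.2).1, (gauss_step ih.1 ih.2).2.1⟩

lemma aSeq_one_le {α : ℝ} (hα : α ∈ Irr01) (n : ℕ) : 1 ≤ aSeq α (n+1) := by
  have h := alphaSeq_mem hα n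
  exact (gauss_step h.1 h.2).2.2.1

lemma gaussMap_alphaSeq {α : ℝ} (hα : α ∈ Irr01) (n : ℕ) :
    alphaSeq α (n+1) = 1/(alphaSeq α n) - aSeq α (n+1) := by
  have h := alphaSeq_mem hα n
  rw [alphaSeq_succ, (gauss_step h.1 h.2).2.2.2]; rfl

lemma qSeq_one (α : ℝ) : qSeq α 1 = aSeq α 1 := by
  simp [qSeq, aSeq, alphaSeq]

lemma qSeq_pos {α : ℝ} (hα : α ∈ Irr01) : ∀ n, 1 ≤ qSeq α n ∧ (n:ℤ) ≤ qSeq α n := by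
  have key : ∀ n, (1 ≤ qSeq α n ∧ (n:ℤ) ≤ qSeq α n) ∧
      (1 ≤ qSeq α (n+1) ∧ ((n+1:ℕ):ℤ) ≤ qSeq α (n+1)) := by
    intro n
    induction n with
    | zero =>
      have h1 : qSeq α 1 = aSeq α 1 := qSeq_one α
      have := aSeq_one_le hα 0
      refine ⟨⟨le_refl _, by norm_num [qSeq]⟩, ?_⟩
      rw [h1]; exact ⟨this, by exact_mod_cast this⟩
    | succ n ih =>
      refine ⟨ih.2, ?_⟩
      have hq : qSeq α (n+2) = qSeq α n + aSeq α (n+2) * qSeq α (n+1) := rfl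
      have ha := aSeq_one_le hα (n+1)
      have h1 := ih.1.1
      have h2 := ih.2.1
      have h3 := ih.2.2
      have hmul : qSeq α (n+1) ≤ aSeq α (n+2) * qSeq α (n+1) :=
        le_mul_of_one_le_left (by linarith) ha
      constructor
      · rw [hq]; nlinarith
      · rw [hq]; push_cast; push_cast at h3; nlinarith
  exact fun n => (key n).1

noncomputable def build : List ℤ → ℝ → ℝ
  | [], y => y
  | c :: l, y => 1 / (c + build l y)

lemma build_append (L1 L2 : List ℤ) (y : ℝ) :
    build (L1 ++ L2) y = build L1 (build L2 y) := by
  induction L1 with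
  | nil => rfl
  | cons c l ih => simp [build, ih]

lemma build_spec : ∀ (L : List ℤ), (∀ c ∈ L, 1 ≤ c) → ∀ y : ℝ, y ∈ Set.Ioo (0:ℝ) 1 → Irrational y →
    build L y ∈ Set.Ioo (0:ℝ) 1 ∧ Irrational (build L y) ∧
    alphaSeq (build L y) L.length = y ∧
    ∀ k, k < L.length → aSeq (build L y) (k+1) = L.getD k 0 := by
  intro L
  induction L with
  | nil =>
    intro _ y hy hirr
    exact ⟨hy, hirr, rfl, by simp⟩
  | cons c l ih =>
    intro hL y hy hirr
    have hc : 1 ≤ c := hL c List.mem_cons_self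
    obtain ⟨htm, htirr, hta, htd⟩ := ih (fun d hd => hL d (List.mem_cons_of_mem c hd)) y hy hirr
    set t := build l y with ht
    have hb : build (c :: l) y = 1 / ((c:ℝ) + t) := rfl
    have hct : (1:ℝ) < (c:ℝ) + t := by
      have : (1:ℝ) ≤ (c:ℝ) := by exact_mod_cast hc
      linarith [htm.1]
    have hctne : ((c:ℝ) + t) ≠ 0 := by linarith
    have hbm : build (c :: l) y ∈ Set.Ioo (0:ℝ) 1 := by
      rw [hb]
      constructor
      · positivity
      · rw [div_lt_one (by linarith)]; linarith
    have hbirr : Irrational (build (c :: l) y) := by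
      rw [hb, one_div]
      exact ((htirr.intCast_add c).inv)
    have hinv : 1 / build (c :: l) y = (c:ℝ) + t := by
      rw [hb, one_div_one_div]
    have hfloor : ⌊1 / build (c :: l) y⌋ = c := by
      rw [hinv, Int.floor_intCast_add, Int.floor_eq_zero_iff.2 ⟨htm.1.le, htm.2⟩, add_zero]
    have hG : gaussMap (build (c :: l) y) = t := by
      rw [gaussMap, if_neg (ne_of_gt hbm.1), hinv, Int.floor_intCast_add,
        Int.floor_eq_zero_iff.2 ⟨htm.1.le, htm.2⟩]
      push_cast; ring
    have halpha : ∀ k, alphaSeq (build (c :: l) y) (k+1) = alphaSeq t k := by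
      intro k; rw [alphaSeq_succ', hG]
    refine ⟨hbm, hbirr, ?_, ?_⟩
    · show alphaSeq (build (c::l) y) (l.length + 1) = y
      rw [halpha, hta]
    · intro k hk
      match k with
      | 0 =>
        show (⌊1 / alphaSeq (build (c::l) y) 0⌋ : ℤ) = _
        simpa [alphaSeq] using hfloor
      | k + 1 =>
        have : aSeq (build (c::l) y) (k+2) = ⌊1 / alphaSeq (build (c::l) y) (k+1)⌋ := rfl
        rw [this, halpha]
        have : aSeq t (k+1) = ⌊1 / alphaSeq t k⌋ := rfl
        rw [← this, htd k (by simpa using hk)]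
        simp

/-- (Q, P) : denominator/numerator at `y = 0`. -/
def mQ : List ℤ → ℤ × ℤ
  | [] => (1, 0)
  | c :: l => (c * (mQ l).1 + (mQ l).2, (mQ l).1)

/-- (Q', P') : coefficients of `y`. -/
def mQ' : List ℤ → ℤ × ℤ
  | [] => (0, 1)
  | c :: l => (c * (mQ' l).1 + (mQ' l).2, (mQ' l).1)

lemma mQ_bounds : ∀ (L : List ℤ), (∀ c ∈ L, 1 ≤ c) →
    1 ≤ (mQ L).1 ∧ 0 ≤ (mQ L).2 ∧ 0 ≤ (mQ' L).1 ∧ 0 ≤ (mQ' L).2 ∧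
    (L.length : ℤ) + 1 ≤ (mQ L).1 + (mQ L).2 ∧ (L.length : ℤ) ≤ (mQ L).1 := by
  intro L
  induction L with
  | nil => simp [mQ, mQ']
  | cons c l ih =>
    intro hL
    have hc : 1 ≤ c := hL c List.mem_cons_self
    obtain ⟨h1, h2, h3, h4, h5, h6⟩ := ih (fun d hd => hL d (List.mem_cons_of_mem c hd))
    simp only [mQ, mQ', List.length_cons]
    push_cast
    refine ⟨by nlinarith, by linarith, by nlinarith, h3, ?_, ?_⟩
    · nlinarith
    · nlinarith
  
lemma mQ_det : ∀ (L : List ℤ), (mQ L).2 * (mQ' L).1 - (mQ' L).2 * (mQ L).1 = 1 ∨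
    (mQ L).2 * (mQ' L).1 - (mQ' L).2 * (mQ L).1 = -1 := by
  intro L
  induction L with
  | nil => simp [mQ, mQ']
  | cons c l ih =>
    simp only [mQ, mQ']
    rcases ih with h | h
    · right; nlinarith
    · left; nlinarith

lemma build_eq : ∀ (L : List ℤ), (∀ c ∈ L, 1 ≤ c) → ∀ y : ℝ, y ∈ Set.Icc (0:ℝ) 1 →
    (0:ℝ) < (mQ L).1 + y * (mQ' L).1 ∧
    build L y = ((mQ L).2 + y * (mQ' L).2) / ((mQ L).1 + y * (mQ' L).1) := by
  intro L
  induction L with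
  | nil =>
    intro _ y hy
    simp [mQ, mQ', build]
  | cons c l ih =>
    intro hL y hy
    have hc : 1 ≤ c := hL c List.mem_cons_self
    obtain ⟨hpos, heq⟩ := ih (fun d hd => hL d (List.mem_cons_of_mem c hd)) y hy
    obtain ⟨h1, h2, h3, h4, h5, h6⟩ := mQ_bounds l (fun d hd => hL d (List.mem_cons_of_mem c hd))
    have h1' : (1:ℝ) ≤ ((mQ l).1 : ℝ) := by exact_mod_cast h1
    have h2' : (0:ℝ) ≤ ((mQ l).2 : ℝ) := by exact_mod_cast h2
    have h3' : (0:ℝ) ≤ ((mQ' l).1 : ℝ) := by exact_mod_cast h3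
    have h4' : (0:ℝ) ≤ ((mQ' l).2 : ℝ) := by exact_mod_cast h4
    have hc' : (1:ℝ) ≤ (c:ℝ) := by exact_mod_cast hc
    have hy0 := hy.1
    have hy1 := hy.2
    have hnum : (0:ℝ) ≤ ((mQ l).2 : ℝ) + y * ((mQ' l).2 : ℝ) := by positivity
    have hden2 : (0:ℝ) < (c:ℝ) + build l y := by
      rw [heq]
      have : (0:ℝ) ≤ (((mQ l).2 : ℝ) + y * ((mQ' l).2 : ℝ)) / (((mQ l).1 : ℝ) + y * ((mQ' l).1 : ℝ)) :=
        div_nonneg hnum hpos.le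
      linarith
    constructor
    · simp only [mQ, mQ']
      push_cast
      nlinarith
    · show (1 : ℝ) / ((c:ℝ) + build l y) = _
      rw [heq, add_div' _ _ _ (ne_of_gt hpos), one_div_div]
      simp only [mQ, mQ']
      push_cast
      congr 1
      ring

lemma build_dist (L : List ℤ) (hL : ∀ c ∈ L, 1 ≤ c) {x y : ℝ}
    (hx : x ∈ Set.Icc (0:ℝ) 1) (hy : y ∈ Set.Icc (0:ℝ) 1) :
    |build L y - build L x| ≤ 1 / ((mQ L).1 : ℝ)^2 := by
  obtain ⟨hpx, heqx⟩ := build_eq L hL x hx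
  obtain ⟨hpy, heqy⟩ := build_eq L hL y hy
  obtain ⟨h1, h2, h3, h4, h5, h6⟩ := mQ_bounds L hL
  have h1' : (1:ℝ) ≤ ((mQ L).1 : ℝ) := by exact_mod_cast h1
  have h3' : (0:ℝ) ≤ ((mQ' L).1 : ℝ) := by exact_mod_cast h3
  set Q : ℝ := ((mQ L).1 : ℝ)
  set Q' : ℝ := ((mQ' L).1 : ℝ)
  set Pp : ℝ := ((mQ L).2 : ℝ)
  set P' : ℝ := ((mQ' L).2 : ℝ)
  have hdet : Pp * Q' - P' * Q = 1 ∨ Pp * Q' - P' * Q = -1 := by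
    rcases mQ_det L with h | h
    · left
      rw [show ((1:ℝ)) = ((1:ℤ):ℝ) by norm_num, ← h]
      push_cast; ring
    · right
      rw [show ((-1:ℝ)) = ((-1:ℤ):ℝ) by norm_num, ← h]
      push_cast; ring
  have hdiff : build L y - build L x = (x - y) * (Pp * Q' - P' * Q) / ((Q + y * Q') * (Q + x * Q')) := by
    rw [heqx, heqy, div_sub_div _ _ (ne_of_gt hpy) (ne_of_gt hpx)]
    congr 1
    ring
  rw [hdiff, abs_div, abs_mul]
  have habs : |Pp * Q' - P' * Q| = 1 := by rcases hdet with h | h <;> rw [h] <;> simp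
  rw [habs, mul_one]
  have hxy : |x - y| ≤ 1 := by
    rw [abs_le]; constructor <;> [linarith [hx.1, hy.2]; linarith [hx.2, hy.1]]
  have hQx : Q ≤ Q + x * Q' := by nlinarith [hx.1]
  have hQy : Q ≤ Q + y * Q' := by nlinarith [hy.1]
  have hprod : Q^2 ≤ (Q + y * Q') * (Q + x * Q') := by nlinarith
  have habsden : |(Q + y * Q') * (Q + x * Q')| = (Q + y * Q') * (Q + x * Q') := by
    rw [abs_of_pos]; exact mul_pos hpy hpx
  rw [habsden]
  exact div_le_div₀ zero_le_one hxy (by positivity) hprod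

/-- The list of the first `N` digits of `α`. -/
noncomputable def digits (α : ℝ) (N : ℕ) : List ℤ :=
  (List.range N).map (fun i => aSeq α (i+1))

lemma digits_len (α : ℝ) (N : ℕ) : (digits α N).length = N := by simp [digits]

lemma digits_getD (α : ℝ) (N k : ℕ) (hk : k < N) : (digits α N).getD k 0 = aSeq α (k+1) := by
  simp [digits, List.getD_eq_getElem?_getD, hk]

lemma digits_one_le {α : ℝ} (hα : α ∈ Irr01) (N : ℕ) : ∀ c ∈ digits α N, 1 ≤ c := by
  intro c hc
  simp only [digits, List.mem_map, List.mem_range] at hc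
  obtain ⟨i, _, rfl⟩ := hc
  exact aSeq_one_le hα i

lemma build_reconstruct {α : ℝ} (hα : α ∈ Irr01) : ∀ N, build (digits α N) (alphaSeq α N) = α := by
  intro N
  induction N with
  | zero => rfl
  | succ N ih =>
    have hdig : digits α (N+1) = digits α N ++ [aSeq α (N+1)] := by
      simp [digits, List.range_succ]
    rw [hdig, build_append]
    have hmem := alphaSeq_mem hα N
    have hxne : alphaSeq α N ≠ 0 := ne_of_gt hmem.1.1
    have hstep : (1:ℝ) / (aSeq α (N+1) + alphaSeq α (N+1)) = alphaSeq α N := by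
      rw [gaussMap_alphaSeq hα N]
      have : (aSeq α (N+1) : ℝ) + (1/(alphaSeq α N) - aSeq α (N+1)) = 1 / alphaSeq α N := by ring
      rw [this, one_div_one_div]
    have : build [aSeq α (N+1)] (alphaSeq α (N+1)) = alphaSeq α N := by
      show (1:ℝ) / (aSeq α (N+1) + alphaSeq α (N+1)) = alphaSeq α N
      exact hstep
    rw [this, ih]

lemma qSeq_congr {α β : ℝ} (m : ℕ) (h : ∀ k, k ≤ m → aSeq β k = aSeq α k) :
    ∀ k, k ≤ m → qSeq β k = qSeq α k := by
  intro k
  induction k using Nat.strong_induction_on with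
  | _ k ih =>
    intro hk
    match k with
    | 0 => rfl
    | 1 => rw [qSeq_one, qSeq_one, h 1 hk]
    | k + 2 =>
      show qSeq β k + aSeq β (k+2) * qSeq β (k+1) = qSeq α k + aSeq α (k+2) * qSeq α (k+1)
      rw [h (k+2) hk, ih k (by omega) (by omega), ih (k+1) (by omega) (by omega)]

lemma digits_locally_const {α : ℝ} (hα : α ∈ Irr01) :
    ∀ (m : ℕ) (ε : ℝ), 0 < ε → ∃ δ, 0 < δ ∧ ∀ β, β ∈ Irr01 → |β - α| < δ →
      (∀ k, k ≤ m → aSeq β k = aSeq α k) ∧ |alphaSeq β m - alphaSeq α m| < ε := by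
  intro m
  induction m with
  | zero =>
    intro ε hε
    refine ⟨ε, hε, fun β hβ hd => ⟨fun k hk => ?_, hd⟩⟩
    interval_cases k
    rfl
  | succ m ih =>
    intro ε hε
    set x := alphaSeq α m with hxdef
    obtain ⟨hxm, hxirr⟩ := alphaSeq_mem hα m
    set a := aSeq α (m+1) with hadef
    have hax : a = ⌊1/x⌋ := rfl
    have hirr1x : Irrational (1/x) := by rw [one_div]; exact hxirr.inv
    have hlow : (a:ℝ) < 1/x := by
      rcases lt_or_eq_of_le (Int.floor_le (1/x)) with h | h
      · rw [hax]; exact h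
      · exact absurd ⟨⌊1/x⌋, h⟩ hirr1x
    have hhigh : 1/x < (a:ℝ) + 1 := by rw [hax]; exact_mod_cast Int.lt_floor_add_one (1/x)
    set d := min (1/x - (a:ℝ)) ((a:ℝ) + 1 - 1/x) with hddef
    have hd : 0 < d := lt_min (by linarith) (by linarith)
    have hmd : 0 < min ε d := lt_min hε hd
    set ε' := min (x/2) (x*x/2 * (min ε d / 2)) with hε'def
    have hε' : 0 < ε' :=
      lt_min (by linarith [hxm.1]) (mul_pos (by nlinarith [hxm.1]) (by linarith))
    obtain ⟨δ, hδ, hIH⟩ := ih ε' hε'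
    refine ⟨δ, hδ, fun β hβ hd' => ?_⟩
    obtain ⟨hdig, hclose⟩ := hIH β hβ hd'
    set t := alphaSeq β m with htdef
    obtain ⟨htm, htirr⟩ := alphaSeq_mem hβ m
    have ht2 : x/2 < t := by
      have h1 : ε' ≤ x/2 := min_le_left _ _
      have := abs_lt.1 hclose
      linarith [this.1]
    have htpos : 0 < t := lt_trans (by linarith [hxm.1]) ht2
    have hinvdiff : |1/t - 1/x| < min ε d / 2 := by
      have htne : t ≠ 0 := ne_of_gt htpos
      have hxne : x ≠ 0 := ne_of_gt hxm.1
      have h1 : 1/t - 1/x = (x - t) / (t * x) := by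
        field_simp
      rw [h1, abs_div, abs_of_pos (mul_pos htpos hxm.1)]
      have h2 : |x - t| < ε' := by rw [abs_sub_comm]; exact hclose
      have h3 : x * x / 2 < t * x := by nlinarith [hxm.1]
      have h4 : ε' ≤ x*x/2 * (min ε d / 2) := min_le_right _ _
      rw [div_lt_iff₀ (mul_pos htpos hxm.1)]
      nlinarith [hxm.1]
    have hfloor : ⌊1/t⌋ = a := by
      have h1 : d ≤ 1/x - (a:ℝ) := min_le_left _ _
      have h2 : d ≤ (a:ℝ) + 1 - 1/x := min_le_right _ _
      have h3 := abs_lt.1 hinvdiff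
      have hmdd : min ε d ≤ d := min_le_right _ _
      refine Int.floor_eq_iff.2 ⟨by linarith, by push_cast; linarith⟩
    have hfloorβ : aSeq β (m+1) = ⌊1/t⌋ := rfl
    have hGt : alphaSeq β (m+1) = 1/t - (a:ℝ) := by
      rw [gaussMap_alphaSeq hβ m, hfloorβ, hfloor]
    have hGx : alphaSeq α (m+1) = 1/x - (a:ℝ) := by
      rw [gaussMap_alphaSeq hα m]
    constructor
    · intro k hk
      rcases Nat.eq_or_lt_of_le hk with h | h
      · subst h; rw [hfloorβ, hfloor]
      · exact hdig k (Nat.lt_succ_iff.1 h)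
    · rw [hGt, hGx]
      have : 1/t - (a:ℝ) - (1/x - (a:ℝ)) = 1/t - 1/x := by ring
      rw [this]
      calc |1/t - 1/x| < min ε d / 2 := hinvdiff
        _ ≤ ε := by have := min_le_left ε d; linarith

/-- The set `C_P` of irrational `α ∈ (0,1)` admitting an odd `n ≥ 3` with
`q_n > P(q_{n-1})`, `q_{n+1} > P(q_n)` and `q_{n+2} > P(q_{n+1})`. -/
noncomputable def Cset (P : ℕ → ℝ) : Set ℝ :=
  {α | ∃ n : ℕ, Odd n ∧ 3 ≤ n ∧
    P (qSeq α (n - 1)).toNat < (qSeq α n : ℝ) ∧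
    P (qSeq α n).toNat < (qSeq α (n + 1) : ℝ) ∧
    P (qSeq α (n + 1)).toNat < (qSeq α (n + 2) : ℝ)}



set_option maxHeartbeats 1000000 in
lemma density_core (P : ℕ → ℝ) {α : ℝ} (hα : α ∈ Irr01) {r : ℝ} (hr : 0 < r) :
    ∃ β, β ∈ Irr01 ∧ |β - α| < r ∧ β ∈ Cset P := by
  obtain ⟨K, hK⟩ := exists_nat_gt (1/r)
  set m := 2*K + 2 with hm
  set N := m + 2 with hN
  set M1 := max 1 (⌈P ((qSeq α (m+2)).toNat)⌉ + 1) with hM1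
  set Q1 := qSeq α (m+1) + M1 * qSeq α (m+2) with hQ1
  set M2 := max 1 (⌈P (Q1.toNat)⌉ + 1) with hM2
  set Q2 := qSeq α (m+2) + M2 * Q1 with hQ2
  set M3 := max 1 (⌈P (Q2.toNat)⌉ + 1) with hM3
  set L := digits α N ++ [M1, M2, M3] with hLdef
  set xN := alphaSeq α N with hxN
  obtain ⟨hxNm, hxNirr⟩ := alphaSeq_mem hα N
  have hL1 : ∀ c ∈ L, 1 ≤ c := by
    intro c hc
    rw [hLdef, List.mem_append] at hc
    rcases hc with hc | hc
    · exact digits_one_le hα N c hc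
    · simp only [List.mem_cons, List.mem_singleton] at hc
      rcases hc with rfl | rfl | rfl | h
      · exact le_max_left _ _
      · exact le_max_left _ _
      · exact le_max_left _ _
      · exact absurd h List.not_mem_nil
  set β := build L xN with hβ
  obtain ⟨hβm, hβirr, hβalpha, hβdig⟩ := build_spec L hL1 xN hxNm hxNirr
  have hβIrr01 : β ∈ Irr01 := ⟨hβm, hβirr⟩
  have hLlen : L.length = N + 3 := by simp [hLdef, digits_len]
  -- digits of β agree with α up to N
  have hdig_eq : ∀ k, k ≤ N → aSeq β k = aSeq α k := by
    intro k hk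
    match k with
    | 0 => rfl
    | j + 1 =>
      have hj : j < N := by omega
      have := hβdig j (by omega)
      rw [this, hLdef, List.getD_append _ _ _ _ (by rw [digits_len]; exact hj),
        digits_getD α N j hj]
  have hq_eq : ∀ k, k ≤ N → qSeq β k = qSeq α k := qSeq_congr N hdig_eq
  -- the new digits
  have hdM1 : aSeq β (N+1) = M1 := by
    rw [hβdig N (by omega), hLdef,
      List.getD_append_right _ _ _ _ (by rw [digits_len])]
    simp [digits_len]
  have hdM2 : aSeq β (N+2) = M2 := by
    rw [hβdig (N+1) (by omega), hLdef,
      List.getD_append_right _ _ _ _ (by rw [digits_len]; omega)]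
    simp [digits_len]
  have hdM3 : aSeq β (N+3) = M3 := by
    rw [hβdig (N+2) (by omega), hLdef,
      List.getD_append_right _ _ _ _ (by rw [digits_len]; omega)]
    simp [digits_len]
  -- q-values of β
  have hqN : qSeq β (m+2) = qSeq α (m+2) := hq_eq (m+2) (by omega)
  have hqN1 : qSeq β (m+1) = qSeq α (m+1) := hq_eq (m+1) (by omega)
  have hqQ1 : qSeq β (m+3) = Q1 := by
    show qSeq β (m+1) + aSeq β (m+3) * qSeq β (m+2) = Q1
    have : m + 3 = N + 1 := by omega
    rw [this, hdM1, hqN, hqN1]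
  have hqQ2 : qSeq β (m+4) = Q2 := by
    show qSeq β (m+2) + aSeq β (m+4) * qSeq β (m+3) = Q2
    have : m + 4 = N + 2 := by omega
    rw [this, hdM2, hqN, hqQ1]
  have hqQ3 : qSeq β (m+5) = Q1 + M3 * Q2 := by
    show qSeq β (m+3) + aSeq β (m+5) * qSeq β (m+4) = Q1 + M3 * Q2
    have : m + 5 = N + 3 := by omega
    rw [this, hdM3, hqQ1, hqQ2]
  -- positivity of various q's
  have hqa := qSeq_pos hα
  have hqa1 : 1 ≤ qSeq α (m+1) := (hqa (m+1)).1
  have hqa2 : 1 ≤ qSeq α (m+2) := (hqa (m+2)).1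
  have hM1pos : 1 ≤ M1 := le_max_left _ _
  have hM2pos : 1 ≤ M2 := le_max_left _ _
  have hM3pos : 1 ≤ M3 := le_max_left _ _
  have hQ1pos : 1 ≤ Q1 := by rw [hQ1]; nlinarith
  have hQ2pos : 1 ≤ Q2 := by rw [hQ2]; nlinarith
  -- the three inequalities
  have hceil1 : P ((qSeq α (m+2)).toNat) < (M1 : ℝ) := by
    have h1 := Int.le_ceil (P ((qSeq α (m+2)).toNat))
    have h2 : (⌈P ((qSeq α (m+2)).toNat)⌉ + 1 : ℤ) ≤ M1 := le_max_right _ _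
    have h2' : ((⌈P ((qSeq α (m+2)).toNat)⌉ : ℝ) + 1) ≤ (M1 : ℝ) := by exact_mod_cast h2
    linarith
  have hceil2 : P (Q1.toNat) < (M2 : ℝ) := by
    have h1 := Int.le_ceil (P (Q1.toNat))
    have h2 : (⌈P (Q1.toNat)⌉ + 1 : ℤ) ≤ M2 := le_max_right _ _
    have h2' : ((⌈P (Q1.toNat)⌉ : ℝ) + 1) ≤ (M2 : ℝ) := by exact_mod_cast h2
    linarith
  have hceil3 : P (Q2.toNat) < (M3 : ℝ) := by
    have h1 := Int.le_ceil (P (Q2.toNat))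
    have h2 : (⌈P (Q2.toNat)⌉ + 1 : ℤ) ≤ M3 := le_max_right _ _
    have h2' : ((⌈P (Q2.toNat)⌉ : ℝ) + 1) ≤ (M3 : ℝ) := by exact_mod_cast h2
    linarith
  have hin : β ∈ Cset P := by
    refine ⟨m + 3, ⟨K + 2, by omega⟩, by omega, ?_, ?_, ?_⟩
    · have h1 : m + 3 - 1 = m + 2 := by omega
      rw [h1, hqN, hqQ1]
      have hle : (M1 : ℝ) ≤ (Q1 : ℝ) := by
        rw [hQ1]; push_cast; nlinarith [(show (1:ℝ) ≤ (M1:ℝ) by exact_mod_cast hM1pos),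
          (show (1:ℝ) ≤ (qSeq α (m+1) : ℝ) by exact_mod_cast hqa1),
          (show (1:ℝ) ≤ (qSeq α (m+2) : ℝ) by exact_mod_cast hqa2)]
      linarith [hceil1]
    · rw [show m + 3 + 1 = m + 4 by omega, hqQ1, hqQ2]
      have hle : (M2 : ℝ) ≤ (Q2 : ℝ) := by
        rw [hQ2]; push_cast; nlinarith [(show (1:ℝ) ≤ (M2:ℝ) by exact_mod_cast hM2pos),
          (show (1:ℝ) ≤ (Q1 : ℝ) by exact_mod_cast hQ1pos),
          (show (1:ℝ) ≤ (qSeq α (m+2) : ℝ) by exact_mod_cast hqa2)]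
      linarith [hceil2]
    · rw [show m + 3 + 1 = m + 4 by omega, show m + 3 + 2 = m + 5 by omega, hqQ2, hqQ3]
      have hle : (M3 : ℝ) ≤ ((Q1 + M3 * Q2 : ℤ) : ℝ) := by
        push_cast; nlinarith [(show (1:ℝ) ≤ (M3:ℝ) by exact_mod_cast hM3pos),
          (show (1:ℝ) ≤ (Q1 : ℝ) by exact_mod_cast hQ1pos),
          (show (1:ℝ) ≤ (Q2 : ℝ) by exact_mod_cast hQ2pos)]
      linarith [hceil3]
  -- distance estimate
  have hrec : build (digits α N) xN = α := build_reconstruct hα N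
  set y := build [M1, M2, M3] xN with hy
  have hshort : ∀ c ∈ [M1, M2, M3], 1 ≤ c := by
    intro c hc
    simp only [List.mem_cons, List.mem_singleton] at hc
    rcases hc with rfl | rfl | rfl | h
    · exact hM1pos
    · exact hM2pos
    · exact hM3pos
    · exact absurd h List.not_mem_nil
  obtain ⟨hym, _, _, _⟩ := build_spec [M1, M2, M3] hshort xN hxNm hxNirr
  have hβy : β = build (digits α N) y := by rw [hβ, hLdef, build_append]
  have hd0 : ∀ c ∈ digits α N, 1 ≤ c := digits_one_le hα N
  have hdist : |β - α| ≤ 1 / ((mQ (digits α N)).1 : ℝ)^2 := by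
    have h := build_dist (digits α N) hd0 (x := xN) (y := y)
      ⟨hxNm.1.le, hxNm.2.le⟩ ⟨hym.1.le, hym.2.le⟩
    rw [hrec, ← hβy] at h
    exact h
  obtain ⟨hQ1', _, _, _, _, hQlen⟩ := mQ_bounds (digits α N) hd0
  have hQlen' : (N : ℝ) ≤ ((mQ (digits α N)).1 : ℝ) := by
    exact_mod_cast (by rwa [digits_len] at hQlen)
  have hQ1'' : (1 : ℝ) ≤ ((mQ (digits α N)).1 : ℝ) := by exact_mod_cast hQ1'
  have hKN : (K : ℝ) ≤ (N : ℝ) := by exact_mod_cast (by omega : K ≤ N)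
  have hfinal : |β - α| < r := by
    have hQr : 1/r < ((mQ (digits α N)).1 : ℝ) := by linarith
    have hQpos : (0:ℝ) < ((mQ (digits α N)).1 : ℝ) := by linarith
    have h1 : 1 / ((mQ (digits α N)).1 : ℝ) < r := by
      rw [div_lt_iff₀ hQpos]
      rw [div_lt_iff₀ hr] at hQr
      nlinarith
    have h2 : 1 / ((mQ (digits α N)).1 : ℝ)^2 ≤ 1 / ((mQ (digits α N)).1 : ℝ) := by
      apply one_div_le_one_div_of_le hQpos
      nlinarith
    linarith
  exact ⟨β, hβIrr01, hfinal, hin⟩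

/-- For any `P : ℕ → ℝ_{>0}`, the set `C_P` is open and dense in the space of
irrationals of `(0,1)` (with its subspace topology). -/
theorem stmt6 (P : ℕ → ℝ) (hP : ∀ k, 0 < P k) :
    IsOpen {x : Irr01 | (x : ℝ) ∈ Cset P} ∧ Dense {x : Irr01 | (x : ℝ) ∈ Cset P} := by
  constructor
  · rw [Metric.isOpen_iff]
    intro x hx
    obtain ⟨n, hodd, h3n, hI1, hI2, hI3⟩ := hx
    obtain ⟨δ, hδ, hloc⟩ := digits_locally_const x.2 (n+2) 1 one_pos
    refine ⟨δ, hδ, fun y hy => ?_⟩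
    have hyd : |(y:ℝ) - (x:ℝ)| < δ := by
      have := Metric.mem_ball.1 hy
      rwa [Subtype.dist_eq, Real.dist_eq] at this
    obtain ⟨hdig, -⟩ := hloc y y.2 hyd
    have hq := qSeq_congr (n+2) hdig
    refine ⟨n, hodd, h3n, ?_, ?_, ?_⟩
    · rw [hq (n-1) (by omega), hq n (by omega)]; exact hI1
    · rw [hq n (by omega), hq (n+1) (by omega)]; exact hI2
    · rw [hq (n+1) (by omega), hq (n+2) (by omega)]; exact hI3
  · rw [Metric.dense_iff]
    intro x r hr
    obtain ⟨β, hβmem, hβd, hβC⟩ := density_core P x.2 hr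
    refine ⟨⟨β, hβmem⟩, Metric.mem_ball.2 ?_, hβC⟩
    rw [Subtype.dist_eq, Real.dist_eq]
    exact hβd
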